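/- The algebra AD[0,1] of almost everywhere approximately differentiable functions is (von Neumann) regular: for every f ∈ AD[0,1] there exists g ∈ AD[0,1] with f·g·f = f. Explicitly, one may take g(t) = 1/f(t) where f(t) ≠ 0 and g(t) = 0 otherwise, and this g is approximately differentiable almost everywhere. -/

import Mathlib

open MeasureTheory Set Filter

/-- `t` is a Lebesgue density point of `E`. -/
noncomputable def densityOne (E : Set ℝ) (t : ℝ) : Prop :=
  Tendsto (fun h : ℝ => volume (E ∩ Icc (t - h) (t + h)) / ENNReal.ofReal (2 * h))
    (nhdsWithin 0 (Ioi 0)) (nhds 1)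

/-- `f` has approximate derivative `L` at `t`. -/
noncomputable def HasApproxDerivAt (f : ℝ → ℝ) (L t : ℝ) : Prop :=
  ∀ ε > (0:ℝ), densityOne {s : ℝ | s ≠ t ∧ |(f s - f t) / (s - t) - L| < ε} t

/-- `f` is approximately differentiable at almost every point of `[0,1]`. -/
noncomputable def ApproxDiffAE (f : ℝ → ℝ) : Prop :=
  ∀ᵐ t ∂(volume.restrict (Icc (0:ℝ) 1)), ∃ L, HasApproxDerivAt f L t

lemma densityOne_of_besicovitch {E : Set ℝ} {t : ℝ}
    (h : Tendsto (fun r => volume (E ∩ Metric.closedBall t r) / volume (Metric.closedBall t r))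
      (nhdsWithin 0 (Ioi 0)) (nhds 1)) : densityOne E t := by
  have key : ∀ r : ℝ, volume (E ∩ Icc (t - r) (t + r)) / ENNReal.ofReal (2 * r)
      = volume (E ∩ Metric.closedBall t r) / volume (Metric.closedBall t r) := by
    intro r
    rw [Real.closedBall_eq_Icc, Real.volume_Icc]
    congr 2
    ring
  unfold densityOne
  simp only [key]
  exact h

lemma densityOne_mono {E F : Set ℝ} {t : ℝ} (hEF : E ⊆ F) (hE : densityOne E t) :
    densityOne F t := by
  apply tendsto_of_tendsto_of_tendsto_of_le_of_le' hE tendsto_const_nhds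
  · filter_upwards with h
    exact ENNReal.div_le_div_right (measure_mono (inter_subset_inter_left _ hEF)) _
  · filter_upwards [self_mem_nhdsWithin] with h (hh : h ∈ Ioi 0)
    calc volume (F ∩ Icc (t - h) (t + h)) / ENNReal.ofReal (2 * h)
        ≤ ENNReal.ofReal (2 * h) / ENNReal.ofReal (2 * h) := by
          apply ENNReal.div_le_div_right
          refine le_trans (measure_mono inter_subset_right) ?_
          rw [Real.volume_Icc]
          apply le_of_eq
          congr 1
          ring
      _ ≤ 1 := ENNReal.div_self_le_one

lemma densityOne_diff {E : Set ℝ} {t : ℝ} (hE : densityOne E t) : densityOne (E \ {t}) t := by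
  have key : ∀ h : ℝ, volume ((E \ {t}) ∩ Icc (t - h) (t + h))
      = volume (E ∩ Icc (t - h) (t + h)) := by
    intro h
    rw [show (E \ {t}) ∩ Icc (t - h) (t + h) = (E ∩ Icc (t - h) (t + h)) \ {t} by
      ext s; simp only [mem_diff, mem_inter_iff, mem_singleton_iff]; tauto]
    exact measure_diff_null (measure_singleton t)
  unfold densityOne at *
  simp only [key]
  exact hE

lemma densityOne_inter_Ioo {E : Set ℝ} {t δ : ℝ} (hδ : 0 < δ) (hE : densityOne E t) :
    densityOne (E ∩ Ioo (t - δ) (t + δ)) t := by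
  apply hE.congr'
  filter_upwards [Ioo_mem_nhdsGT_of_mem (⟨le_refl 0, hδ⟩ : (0:ℝ) ∈ Ico 0 δ)] with h hh
  have hsub : Icc (t - h) (t + h) ⊆ Ioo (t - δ) (t + δ) :=
    Icc_subset_Ioo (by linarith [hh.2]) (by linarith [hh.2])
  rw [inter_assoc, inter_eq_self_of_subset_right hsub]

set_option maxHeartbeats 1000000 in
lemma approx_inv {f : ℝ → ℝ} {L t : ℝ} (ht : f t ≠ 0) (hfa : HasApproxDerivAt f L t) :
    HasApproxDerivAt (fun s => if f s ≠ 0 then (f s)⁻¹ else 0) (-L / (f t) ^ 2) t := by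
  intro ε hε
  set a := |f t| with ha
  have ha0 : 0 < a := abs_pos.mpr ht
  set ε₁ : ℝ := min 1 (ε * a ^ 2 / 4) with hε₁def
  have hε₁0 : 0 < ε₁ := lt_min one_pos (by positivity)
  set δ : ℝ := min (a / (2 * (|L| + 1))) (ε * a ^ 3 / (4 * (|L| + 1) ^ 2)) with hδdef
  have hδ0 : 0 < δ := lt_min (by positivity) (by positivity)
  have hd := densityOne_inter_Ioo hδ0 (hfa ε₁ hε₁0)
  apply densityOne_mono ?_ hd
  rintro s ⟨⟨hst, hq⟩, hs⟩
  refine ⟨hst, ?_⟩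
  set q := (f s - f t) / (s - t) with hqdef
  have hst' : s - t ≠ 0 := sub_ne_zero.mpr hst
  have habs_st : |s - t| ≤ δ := by
    rw [abs_le]; exact ⟨by linarith [hs.1], by linarith [hs.2]⟩
  have hqL : |q| ≤ |L| + 1 := by
    have h1 := abs_sub_abs_le_abs_sub q L
    have h2 : ε₁ ≤ 1 := min_le_left _ _
    linarith
  have hfsft : |f s - f t| ≤ (|L| + 1) * |s - t| := by
    have heq : f s - f t = q * (s - t) := by
      rw [hqdef]; field_simp
    rw [heq, abs_mul]
    have := abs_nonneg (s - t)
    nlinarith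
  have hδa : (|L| + 1) * δ ≤ a / 2 := by
    have h1 : δ ≤ a / (2 * (|L| + 1)) := min_le_left _ _
    have hL1 : (0:ℝ) < |L| + 1 := by positivity
    rw [show a / 2 = (|L| + 1) * (a / (2 * (|L| + 1))) by field_simp]
    nlinarith
  have hfsft' : |f s - f t| ≤ a / 2 := by
    have : (|L| + 1) * |s - t| ≤ (|L| + 1) * δ :=
      mul_le_mul_of_nonneg_left habs_st (by positivity)
    linarith
  have hfs_lb : a / 2 ≤ |f s| := by
    have h1 := abs_sub_abs_le_abs_sub (f t) (f s)
    rw [abs_sub_comm] at h1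
    linarith
  have hfs0 : f s ≠ 0 := by
    intro h0
    rw [h0, abs_zero] at hfs_lb
    linarith
  show |((if f s ≠ 0 then (f s)⁻¹ else 0) - (if f t ≠ 0 then (f t)⁻¹ else 0)) / (s - t)
      - (-L / (f t) ^ 2)| < ε
  rw [if_pos hfs0, if_pos ht]
  have key : ((f s)⁻¹ - (f t)⁻¹) / (s - t) - (-L / (f t) ^ 2)
      = (L * (f s - f t) + (L - q) * f t) / (f s * (f t) ^ 2) := by
    rw [hqdef]
    field_simp
    ring
  rw [key, abs_div]
  have hden : a ^ 3 / 2 ≤ |f s * f t ^ 2| := by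
    rw [abs_mul, abs_pow, ← ha]
    nlinarith
  have hnum : |L * (f s - f t) + (L - q) * f t| < ε * a ^ 3 / 2 := by
    have h1 : |L * (f s - f t) + (L - q) * f t| ≤ |L| * |f s - f t| + |L - q| * a := by
      calc |L * (f s - f t) + (L - q) * f t| ≤ |L * (f s - f t)| + |(L - q) * f t| :=
            abs_add_le _ _
        _ = |L| * |f s - f t| + |L - q| * a := by rw [abs_mul, abs_mul, ha]
    have h2 : |L| * |f s - f t| ≤ ε * a ^ 3 / 4 := by
      have h3 : δ ≤ ε * a ^ 3 / (4 * (|L| + 1) ^ 2) := min_le_right _ _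
      have h4 : |L| * |f s - f t| ≤ (|L| + 1) ^ 2 * δ := by
        have := abs_nonneg (f s - f t)
        have := abs_nonneg L
        nlinarith
      have hL1 : (0:ℝ) < (|L| + 1) ^ 2 := by positivity
      have h3' : (|L| + 1) ^ 2 * δ ≤ ε * a ^ 3 / 4 := by
        have h3'' := mul_le_mul_of_nonneg_left h3 (le_of_lt hL1)
        rw [show (|L| + 1) ^ 2 * (ε * a ^ 3 / (4 * (|L| + 1) ^ 2)) = ε * a ^ 3 / 4 by
          field_simp] at h3''
        exact h3''
      linarith
    have h5 : |L - q| * a < ε * a ^ 3 / 4 := by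
      rw [abs_sub_comm]
      have h6 : ε₁ ≤ ε * a ^ 2 / 4 := min_le_right _ _
      have h7 : |q - L| * a < ε * a ^ 2 / 4 * a :=
        mul_lt_mul_of_pos_right (lt_of_lt_of_le hq h6) ha0
      have h8 : ε * a ^ 2 / 4 * a = ε * a ^ 3 / 4 := by ring
      linarith
    linarith
  calc |L * (f s - f t) + (L - q) * f t| / |f s * f t ^ 2|
      ≤ |L * (f s - f t) + (L - q) * f t| / (a ^ 3 / 2) := by
        gcongr
    _ < ε := by
        rw [div_lt_iff₀ (by positivity)]
        nlinarith
  
lemma approx_zero {f : ℝ → ℝ} {t : ℝ} (ht : f t = 0) (hd : densityOne {s | f s = 0} t) :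
    HasApproxDerivAt (fun s => if f s ≠ 0 then (f s)⁻¹ else 0) 0 t := by
  intro ε hε
  apply densityOne_mono ?_ (densityOne_diff hd)
  rintro s ⟨hs0, hst⟩
  simp only [mem_setOf_eq] at hs0
  refine ⟨hst, ?_⟩
  simp [hs0, ht, hε]

/-- The algebra `AD[0,1]` is von Neumann regular: for every `f ∈ AD[0,1]` there is
`g ∈ AD[0,1]` with `f·g·f = f`; explicitly one may take `g = 1/f` on `{f ≠ 0}` and `g = 0`
elsewhere, and this `g` is a.e. approximately differentiable. -/
theorem stmt_6 (f : ℝ → ℝ) (hf : Measurable f) (haf : ApproxDiffAE f) :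
    ∃ g : ℝ → ℝ, Measurable g ∧ ApproxDiffAE g ∧ (∀ t, f t * g t * f t = f t) ∧
      g = fun t => if f t ≠ 0 then (f t)⁻¹ else 0 := by
  refine ⟨fun t => if f t ≠ 0 then (f t)⁻¹ else 0, ?_, ?_, ?_, rfl⟩
  · have hs : MeasurableSet {t : ℝ | f t ≠ 0} := (hf (measurableSet_singleton 0)).compl
    exact Measurable.ite hs hf.inv measurable_const
  · have hZ : MeasurableSet {s : ℝ | f s = 0} := hf (measurableSet_singleton 0)
    have h1 := Besicovitch.ae_tendsto_measure_inter_div volume {s : ℝ | f s = 0}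
    rw [ae_restrict_iff' hZ] at h1
    have h2 : ∀ᵐ t ∂(volume : Measure ℝ), t ∈ Icc (0:ℝ) 1 → ∃ L, HasApproxDerivAt f L t :=
      (ae_restrict_iff' measurableSet_Icc).mp haf
    rw [ApproxDiffAE, ae_restrict_iff' measurableSet_Icc]
    filter_upwards [h1, h2] with t ht1 ht2 htIcc
    by_cases h0 : f t = 0
    · exact ⟨0, approx_zero h0 (densityOne_of_besicovitch (ht1 h0))⟩
    · obtain ⟨L, hL⟩ := ht2 htIcc
      exact ⟨-L / (f t) ^ 2, approx_inv h0 hL⟩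
  · intro t
    by_cases h : f t = 0 <;> simp [h]
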